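/- arXiv:2309.00418 — 2 statements merged into one kernel-verified Lean document; each statement's English description precedes it below -/
import Mathlib

section
/- Let ε₀ ∈ (0,1), τ > 0, and suppose g, m : [ε₀,1] → ℝ are C¹ with g ≥ 1, m > 1, g(ε₀) = 1, and they satisfy (1/g - 1/g³)g' + (1/m - 1/m³)m' + (1/τ)(1/g - 1/m) = 4/r on [ε₀,1]. Then for all r ∈ [ε₀,1]: w(m(r)) - w(m(ε₀)) ≤ -w(g(r)) + 1/2 + 1/τ - 4 ln ε₀, where w(h) = ln h + 1/(2h²). -/
noncomputable def w (h : ℝ) : ℝ := Real.log h + 1 / (2 * h ^ 2)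

lemma hasDerivAt_w_comp {g : ℝ → ℝ} {d r : ℝ} (hg : HasDerivAt g d r) (h0 : g r ≠ 0) :
    HasDerivAt (fun s => w (g s)) ((1 / g r - 1 / (g r) ^ 3) * d) r := by
  have h1 : HasDerivAt (fun s => Real.log (g s)) (d / g r) r := hg.log h0
  have h2 : HasDerivAt (fun s => 2 * (g s) ^ 2) (2 * (2 * g r ^ 1 * d)) r :=
    (hg.pow 2).const_mul 2
  have h3 : HasDerivAt (fun s => (2 * (g s) ^ 2)⁻¹)
      (-(2 * (2 * g r ^ 1 * d)) / (2 * (g r) ^ 2) ^ 2) r := by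
    apply h2.inv
    positivity
  have h4 := h1.add h3
  convert h4 using 1
  · rfl
  · rfl
  · ext s; simp [w, one_div]
  · field_simp
    ring

theorem ode_integrated_inequality (ε₀ τ : ℝ) (hε₀ : ε₀ ∈ Set.Ioo (0 : ℝ) 1) (hτ : 0 < τ)
    (g m g' m' : ℝ → ℝ)
    (hg' : ContinuousOn g' (Set.Icc ε₀ 1)) (hm' : ContinuousOn m' (Set.Icc ε₀ 1))
    (hgd : ∀ r ∈ Set.Icc ε₀ 1, HasDerivAt g (g' r) r)
    (hmd : ∀ r ∈ Set.Icc ε₀ 1, HasDerivAt m (m' r) r)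
    (hg : ∀ r ∈ Set.Icc ε₀ 1, 1 ≤ g r) (hm : ∀ r ∈ Set.Icc ε₀ 1, 1 < m r)
    (hg0 : g ε₀ = 1)
    (hode : ∀ r ∈ Set.Icc ε₀ 1,
      (1 / g r - 1 / (g r) ^ 3) * g' r + (1 / m r - 1 / (m r) ^ 3) * m' r +
        (1 / τ) * (1 / g r - 1 / m r) = 4 / r) :
    ∀ r ∈ Set.Icc ε₀ 1,
      w (m r) - w (m ε₀) ≤ -w (g r) + 1 / 2 + 1 / τ - 4 * Real.log ε₀ := by
  obtain ⟨hε0, hε1⟩ := hε₀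
  intro r hr
  obtain ⟨hr1, hr2⟩ := hr
  have hrpos : 0 < r := lt_of_lt_of_le hε0 hr1
  have hgc : ContinuousOn g (Set.Icc ε₀ 1) := fun s hs => ((hgd s hs).continuousAt).continuousWithinAt
  have hmc : ContinuousOn m (Set.Icc ε₀ 1) := fun s hs => ((hmd s hs).continuousAt).continuousWithinAt
  have hgne : ∀ s ∈ Set.Icc ε₀ 1, g s ≠ 0 := fun s hs => by
    have := hg s hs; linarith
  have hmne : ∀ s ∈ Set.Icc ε₀ 1, m s ≠ 0 := fun s hs => by
    have := hm s hs; linarith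
  set φ : ℝ → ℝ := fun s => 4 / s - (1 / τ) * (1 / g s - 1 / m s) with hφ
  have hsub : Set.Icc ε₀ r ⊆ Set.Icc ε₀ 1 := Set.Icc_subset_Icc le_rfl hr2
  have hderiv : ∀ s ∈ Set.uIcc ε₀ r, HasDerivAt (fun t => w (g t) + w (m t)) (φ s) s := by
    intro s hs
    rw [Set.uIcc_of_le hr1] at hs
    have hs' := hsub hs
    have h1 := hasDerivAt_w_comp (hgd s hs') (hgne s hs')
    have h2 := hasDerivAt_w_comp (hmd s hs') (hmne s hs')
    have h3 := h1.add h2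
    convert h3 using 1
    · rfl
    · rfl
    · rfl
    have := hode s hs'
    rw [hφ]
    simp only
    linarith
  have hφcont : ContinuousOn φ (Set.Icc ε₀ 1) := by
    apply ContinuousOn.sub
    · exact continuousOn_const.div continuousOn_id (fun s hs => by
        have := hs.1; intro h; rw [h] at this; linarith)
    · exact continuousOn_const.mul ((continuousOn_const.div hgc hgne).sub
        (continuousOn_const.div hmc hmne))
  have hint : IntervalIntegrable φ MeasureTheory.volume ε₀ r :=
    (hφcont.mono (by rw [Set.uIcc_of_le hr1]; exact hsub)).intervalIntegrable
  have hftc := intervalIntegral.integral_eq_sub_of_hasDerivAt hderiv hint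
  have hint1 : IntervalIntegrable (fun s => 4 / s) MeasureTheory.volume ε₀ r := by
    apply ContinuousOn.intervalIntegrable
    rw [Set.uIcc_of_le hr1]
    exact continuousOn_const.div continuousOn_id (fun s hs => by
      have := hs.1; intro h; rw [h] at this; linarith)
  have hint2 : IntervalIntegrable (fun s => (1 / τ) * (1 / g s - 1 / m s))
      MeasureTheory.volume ε₀ r := by
    apply ContinuousOn.intervalIntegrable
    rw [Set.uIcc_of_le hr1]
    exact (continuousOn_const.mul ((continuousOn_const.div hgc hgne).sub
        (continuousOn_const.div hmc hmne))).mono hsub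
  have hsplit : ∫ s in ε₀..r, φ s =
      (∫ s in ε₀..r, 4 / s) - ∫ s in ε₀..r, (1 / τ) * (1 / g s - 1 / m s) :=
    intervalIntegral.integral_sub hint1 hint2
  have hlog : ∫ s in ε₀..r, 4 / s = 4 * (Real.log r - Real.log ε₀) := by
    have h4 : ∫ s in ε₀..r, 4 / s = 4 * ∫ s in ε₀..r, 1 / s := by
      rw [← intervalIntegral.integral_const_mul]
      congr 1; ext s; ring
    rw [h4, integral_one_div (by
      rw [Set.uIcc_of_le hr1]; intro h; exact absurd h.1 (not_le.mpr hε0)),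
      Real.log_div (ne_of_gt hrpos) (ne_of_gt hε0)]
  -- bound the second integral from below
  have hbound : -(r - ε₀) ≤ ∫ s in ε₀..r, (1 / g s - 1 / m s) := by
    have hintgm : IntervalIntegrable (fun s => 1 / g s - 1 / m s) MeasureTheory.volume ε₀ r := by
      apply ContinuousOn.intervalIntegrable
      rw [Set.uIcc_of_le hr1]
      exact ((continuousOn_const.div hgc hgne).sub
        (continuousOn_const.div hmc hmne)).mono hsub
    have hconst : IntervalIntegrable (fun _ : ℝ => (-1 : ℝ)) MeasureTheory.volume ε₀ r :=
      intervalIntegrable_const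
    have hmono := intervalIntegral.integral_mono_on hr1 hconst hintgm (fun s hs => by
      have hs' := hsub hs
      have hg1 := hg s hs'
      have hm1 := hm s hs'
      have h1 : 0 < 1 / g s := by positivity
      have h2 : 1 / m s ≤ 1 := by
        rw [div_le_one (by linarith)]; linarith
      linarith)
    simpa using hmono
  have hτi : 0 < 1 / τ := by positivity
  -- assemble
  have hintval : ∫ s in ε₀..r, (1 / τ) * (1 / g s - 1 / m s)
      = (1 / τ) * ∫ s in ε₀..r, (1 / g s - 1 / m s) :=
    intervalIntegral.integral_const_mul _ _
  have key : w (g r) + w (m r) - (w (g ε₀) + w (m ε₀))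
      = 4 * (Real.log r - Real.log ε₀)
        - (1 / τ) * ∫ s in ε₀..r, (1 / g s - 1 / m s) := by
    rw [← hftc, hsplit, hlog, hintval]
  have hw1 : w (g ε₀) = 1 / 2 := by
    rw [hg0]; simp [w]
  have hlogr : Real.log r ≤ 0 := Real.log_nonpos (le_of_lt hrpos) hr2
  have hτb : -(1 / τ) * ∫ s in ε₀..r, (1 / g s - 1 / m s) ≤ 1 / τ := by
    have h1 : (1 / τ) * (r - ε₀) ≤ 1 / τ * 1 := by
      apply mul_le_mul_of_nonneg_left _ hτi.le
      linarith
    nlinarith [hbound]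
  nlinarith [key, hw1, hlogr, hτb]
end

section
/- (Ill-posedness, key quantitative step.) Let ε₀ ∈ (0,1), τ > 0, ḡ > 1, and let g : [ε₀,1] → ℝ be C¹ with 1 ≤ g ≤ ḡ. Let p ∈ (ε₀ + (1-ε₀)/2, 1), q ∈ (ε₀, ε₀ + (1-ε₀)/4), and suppose W : [ε₀,1] → ℝ is C¹ with W'(q) = -(1/q²)∫_q^p (g(s) - m(s) - B(s) + 2) ds + (1/(τq²))(p²/g(p) - q²/g(q)), where m ≥ 1 and B(s) ≥ B* on (ε₀+(1-ε₀)/4, ε₀+3(1-ε₀)/4) with B ≥ 0 elsewhere. Then W'(q) ≥ (1/q²)((1-ε₀)B*/4 - (ḡ + 2)) - 1/τ. -/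
open MeasureTheory

theorem illposed_key_step (ε₀ τ gbar Bstar : ℝ) (p q : ℝ)
    (hε₀ : ε₀ ∈ Set.Ioo (0 : ℝ) 1) (hτ : 0 < τ) (hgbar : 1 < gbar)
    (hp : p ∈ Set.Ioo (ε₀ + (1 - ε₀) / 2) 1)
    (hq : q ∈ Set.Ioo ε₀ (ε₀ + (1 - ε₀) / 4))
    (g m B : ℝ → ℝ) (W : ℝ → ℝ)
    (hgC1 : ContDiffOn ℝ 1 g (Set.Icc ε₀ 1))
    (hg : ∀ r ∈ Set.Icc ε₀ 1, 1 ≤ g r ∧ g r ≤ gbar)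
    (hm : ∀ r ∈ Set.Icc ε₀ 1, 1 ≤ m r)
    (hB_mid : ∀ r ∈ Set.Ioo (ε₀ + (1 - ε₀) / 4) (ε₀ + 3 * (1 - ε₀) / 4), Bstar ≤ B r)
    (hB_nonneg : ∀ r ∈ Set.Icc ε₀ 1, 0 ≤ B r)
    (hmInt : IntervalIntegrable m volume q p)
    (hBInt : IntervalIntegrable B volume q p)
    (hWC1 : ContDiffOn ℝ 1 W (Set.Icc ε₀ 1))
    (hW'q : deriv W q =
      -(1 / q ^ 2) * (∫ s in q..p, (g s - m s - B s + 2)) +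
        (1 / (τ * q ^ 2)) * (p ^ 2 / g p - q ^ 2 / g q)) :
    deriv W q ≥ (1 / q ^ 2) * ((1 - ε₀) * Bstar / 4 - (gbar + 2)) - 1 / τ := by
  obtain ⟨hε0, hε1⟩ := hε₀
  obtain ⟨hp1, hp2⟩ := hp
  obtain ⟨hq1, hq2⟩ := hq
  set a1 : ℝ := ε₀ + (1 - ε₀) / 4 with ha1
  set c : ℝ := ε₀ + (1 - ε₀) / 2 with hc
  have hq0 : 0 < q := lt_trans hε0 hq1
  have hqa1 : q < a1 := hq2
  have ha1c : a1 < c := by rw [ha1, hc]; linarith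
  have hcp : c < p := hp1
  have hqp : q ≤ p := by linarith
  have hsub : Set.Icc q p ⊆ Set.Icc ε₀ 1 :=
    Set.Icc_subset_Icc (le_of_lt hq1) (le_of_lt hp2)
  -- integrability facts
  have hgInt : IntervalIntegrable g volume q p := by
    apply ContinuousOn.intervalIntegrable
    apply (hgC1.continuousOn).mono
    rw [Set.uIcc_of_le hqp]; exact hsub
  have hf1Int : IntervalIntegrable (fun s => g s - m s + 2) volume q p :=
    (hgInt.sub hmInt).add intervalIntegrable_const
  have hBInt1 : IntervalIntegrable B volume q a1 := by
    apply hBInt.mono_set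
    rw [Set.uIcc_of_le (le_of_lt hqa1), Set.uIcc_of_le hqp]
    exact Set.Icc_subset_Icc le_rfl (by linarith)
  have hBInt2 : IntervalIntegrable B volume a1 c := by
    apply hBInt.mono_set
    rw [Set.uIcc_of_le (le_of_lt ha1c), Set.uIcc_of_le hqp]
    exact Set.Icc_subset_Icc (by linarith) (by linarith)
  have hBInt3 : IntervalIntegrable B volume c p := by
    apply hBInt.mono_set
    rw [Set.uIcc_of_le (le_of_lt hcp), Set.uIcc_of_le hqp]
    exact Set.Icc_subset_Icc (by linarith) le_rfl
  -- split the integrand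
  have hsplit : (∫ s in q..p, (g s - m s - B s + 2)) =
      (∫ s in q..p, (g s - m s + 2)) - ∫ s in q..p, B s := by
    rw [← intervalIntegral.integral_sub hf1Int hBInt]
    congr 1; ext s; ring
  -- upper bound for the (g - m + 2) integral
  have hf1le : (∫ s in q..p, (g s - m s + 2)) ≤ gbar + 2 := by
    have h1 : (∫ s in q..p, (g s - m s + 2)) ≤ ∫ _ in q..p, (gbar + 1) := by
      apply intervalIntegral.integral_mono_on hqp hf1Int intervalIntegrable_const
      intro x hx
      have hx' := hsub hx
      have h2 := (hg x hx').2
      have h3 := hm x hx'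
      linarith
    rw [intervalIntegral.integral_const, smul_eq_mul] at h1
    nlinarith
  -- lower bound for the B integral
  have hB1 : 0 ≤ ∫ s in q..a1, B s := by
    apply intervalIntegral.integral_nonneg (le_of_lt hqa1)
    intro u hu
    exact hB_nonneg u ⟨by linarith [hu.1], by linarith [hu.2]⟩
  have hB3 : 0 ≤ ∫ s in c..p, B s := by
    apply intervalIntegral.integral_nonneg (le_of_lt hcp)
    intro u hu
    exact hB_nonneg u ⟨by linarith [hu.1], by linarith [hu.2]⟩
  have hB2 : (1 - ε₀) * Bstar / 4 ≤ ∫ s in a1..c, B s := by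
    have h1 : (∫ _ in a1..c, Bstar) ≤ ∫ s in a1..c, B s := by
      apply intervalIntegral.integral_mono_ae_restrict (le_of_lt ha1c)
        intervalIntegrable_const hBInt2
      rw [← Measure.restrict_congr_set (Ioo_ae_eq_Icc (α := ℝ) (a := a1) (b := c))]
      filter_upwards [ae_restrict_mem measurableSet_Ioo] with x hx
      exact hB_mid x ⟨hx.1, by rw [hc] at hx; linarith [hx.2]⟩
    rw [intervalIntegral.integral_const, smul_eq_mul] at h1
    have h2 : (c - a1) * Bstar = (1 - ε₀) * Bstar / 4 := by rw [hc, ha1]; ring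
    calc (1 - ε₀) * Bstar / 4 = (c - a1) * Bstar := h2.symm
      _ ≤ _ := h1
  have hBtotal : (1 - ε₀) * Bstar / 4 ≤ ∫ s in q..p, B s := by
    have e1 : (∫ s in q..a1, B s) + (∫ s in a1..p, B s) = ∫ s in q..p, B s :=
      intervalIntegral.integral_add_adjacent_intervals hBInt1 (hBInt2.trans hBInt3)
    have e2 : (∫ s in a1..c, B s) + (∫ s in c..p, B s) = ∫ s in a1..p, B s :=
      intervalIntegral.integral_add_adjacent_intervals hBInt2 hBInt3
    linarith
  -- bound on the boundary term
  have hgp : 1 ≤ g p := (hg p ⟨by linarith, le_of_lt hp2⟩).1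
  have hgq : 1 ≤ g q := (hg q ⟨le_of_lt hq1, by linarith⟩).1
  have hD : -q ^ 2 ≤ p ^ 2 / g p - q ^ 2 / g q := by
    have h1 : 0 ≤ p ^ 2 / g p := div_nonneg (sq_nonneg p) (by linarith)
    have h2 : q ^ 2 / g q ≤ q ^ 2 := div_le_self (sq_nonneg q) hgq
    linarith
  -- combine
  rw [hW'q, hsplit]
  have hq2pos : (0:ℝ) < 1 / q ^ 2 := by positivity
  have hτq2pos : (0:ℝ) < 1 / (τ * q ^ 2) := by positivity
  have h3 : 1 / (τ * q ^ 2) * (-q ^ 2) ≤ 1 / (τ * q ^ 2) * (p ^ 2 / g p - q ^ 2 / g q) :=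
    mul_le_mul_of_nonneg_left hD hτq2pos.le
  have h4 : 1 / (τ * q ^ 2) * (-q ^ 2) = -(1 / τ) := by
    field_simp
  have h5 : (1 / q ^ 2) * ((1 - ε₀) * Bstar / 4 - (gbar + 2)) ≤
      (1 / q ^ 2) * ((∫ s in q..p, B s) - ∫ s in q..p, (g s - m s + 2)) :=
    mul_le_mul_of_nonneg_left (by linarith) hq2pos.le
  have h6 : -(1 / q ^ 2) * ((∫ s in q..p, (g s - m s + 2)) - ∫ s in q..p, B s) =
      (1 / q ^ 2) * ((∫ s in q..p, B s) - ∫ s in q..p, (g s - m s + 2)) := by ring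
  linarith [h3, h4, h5, h6]
end
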